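/- For any finite simple graph G, n(G) − min{2γ(G), γ₂(G)} ≤ ∂_s(G) ≤ n(G) − γ(G) − σ(G), where σ(G) denotes the number of support vertices of G adjacent to more than one leaf. -/

import Mathlib

open Finset

namespace StrongDifferential

variable {V : Type*} [Fintype V] [DecidableEq V] (G : SimpleGraph V) [DecidableRel G.Adj]

/-- The external neighbourhood `N_e(D)` of a set `D`: vertices outside `D`
with a neighbour in `D`. -/
def extNbhd (D : Finset V) : Finset V :=
  univ.filter fun u => u ∉ D ∧ ∃ v ∈ D, G.Adj u v

/-- The external private neighbourhood `epn(v, D)` of `v` with respect to `D`. -/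
def epn (v : V) (D : Finset V) : Finset V :=
  univ.filter fun u => u ∉ D ∧ G.neighborFinset u ∩ D = {v}

/-- `D_w`: the vertices of `D` having a nonempty external private neighbourhood. -/
def weak (D : Finset V) : Finset V :=
  D.filter fun v => (epn G v D).Nonempty

/-- `D_s = D \ D_w`. -/
def strong (D : Finset V) : Finset V :=
  D \ weak G D

/-- The strong differential `∂ₛ(D) = |N_e(D)| - |D_w|` of a set `D`. -/
def sdiffSet (D : Finset V) : ℤ :=
  (extNbhd G D).card - (weak G D).card

/-- The strong differential `∂ₛ(G) = max {∂ₛ(D) : D ⊆ V(G)}` of the graph `G`. -/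
def sdiff : ℤ :=
  (univ : Finset V).powerset.sup' ⟨∅, empty_mem_powerset _⟩ (sdiffSet G)

/-- The differential `∂(D) = |N_e(D)| - |D|` of a set `D`. -/
def diffSet (D : Finset V) : ℤ :=
  (extNbhd G D).card - D.card

/-- The differential `∂(G) = max {∂(D) : D ⊆ V(G)}` of the graph `G`. -/
def gdiff : ℤ :=
  (univ : Finset V).powerset.sup' ⟨∅, empty_mem_powerset _⟩ (diffSet G)

/-- A dominating set: every vertex outside `D` has a neighbour in `D`. -/
def IsDomSet (D : Finset V) : Prop :=
  ∀ v, v ∉ D → ∃ u ∈ D, G.Adj v u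

/-- The domination number `γ(G)`. -/
noncomputable def gamma : ℕ :=
  sInf {k | ∃ D : Finset V, IsDomSet G D ∧ D.card = k}

/-- A 2-dominating set: every vertex outside `D` has at least two neighbours in `D`. -/
def Is2DomSet (D : Finset V) : Prop :=
  ∀ v, v ∉ D → 2 ≤ (G.neighborFinset v ∩ D).card

/-- The 2-domination number `γ₂(G)`. -/
noncomputable def gamma2 : ℕ :=
  sInf {k | ∃ D : Finset V, Is2DomSet G D ∧ D.card = k}

/-- An Italian dominating function: `f : V → {0,1,2}` such that every
vertex of weight `0` has total weight at least `2` on its neighbourhood. -/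
def IsIDF (f : V → ℕ) : Prop :=
  (∀ v, f v ≤ 2) ∧ ∀ v, f v = 0 → 2 ≤ ∑ u ∈ G.neighborFinset v, f u

/-- The Italian domination number `γ_I(G)`. -/
noncomputable def italian : ℕ :=
  sInf {k | ∃ f : V → ℕ, IsIDF G f ∧ ∑ v, f v = k}

/-- `σ(G)`: the number of vertices adjacent to at least two leaves. -/
def sigmaSupp : ℕ :=
  (univ.filter fun v => 2 ≤ ((G.neighborFinset v).filter fun u => G.degree u = 1).card).card

/-- The independence number `α(G)`. -/
noncomputable def indepNum : ℕ :=
  sSup {k | ∃ S : Finset V, (∀ u ∈ S, ∀ w ∈ S, u ≠ w → ¬ G.Adj u w) ∧ S.card = k}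

/-- The vertex cover number `β(G)`. -/
noncomputable def vcNum : ℕ :=
  sInf {k | ∃ S : Finset V, (∀ u v, G.Adj u v → u ∈ S ∨ v ∈ S) ∧ S.card = k}

/-- A semitotal dominating set: a dominating set in which every vertex is
within distance two of another vertex of the set. -/
def IsSemitotalDomSet (D : Finset V) : Prop :=
  IsDomSet G D ∧ ∀ v ∈ D, ∃ u ∈ D, u ≠ v ∧ (G.Adj v u ∨ ∃ w, G.Adj v w ∧ G.Adj w u)

/-- The semitotal domination number `γ_{t2}(G)`. -/
noncomputable def gammaT2 : ℕ :=
  sInf {k | ∃ D : Finset V, IsSemitotalDomSet G D ∧ D.card = k}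


section Aux

variable {V : Type*} [Fintype V] [DecidableEq V] (G : SimpleGraph V) [DecidableRel G.Adj]

lemma gamma_le_card {D : Finset V} (hD : IsDomSet G D) : gamma G ≤ D.card :=
  Nat.sInf_le ⟨D, hD, rfl⟩

lemma exists_gamma : ∃ D : Finset V, IsDomSet G D ∧ D.card = gamma G :=
  Nat.sInf_mem (s := {k | ∃ D : Finset V, IsDomSet G D ∧ D.card = k})
    ⟨Fintype.card V, univ, fun v hv => absurd (mem_univ v) hv, card_univ⟩

lemma exists_gamma2 : ∃ D : Finset V, Is2DomSet G D ∧ D.card = gamma2 G :=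
  Nat.sInf_mem (s := {k | ∃ D : Finset V, Is2DomSet G D ∧ D.card = k})
    ⟨Fintype.card V, univ, fun v hv => absurd (mem_univ v) hv, card_univ⟩

lemma extNbhd_of_dom {D : Finset V} (hD : IsDomSet G D) :
    extNbhd G D = univ \ D := by
  ext u
  simp only [extNbhd, mem_filter, mem_univ, true_and, mem_sdiff]
  exact ⟨fun h => h.1, fun h => ⟨h, hD u h⟩⟩

lemma sdiffSet_le_sdiff (D : Finset V) : sdiffSet G D ≤ sdiff G :=
  Finset.le_sup' (sdiffSet G) (mem_powerset.mpr (subset_univ D))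

lemma lb_dom {D : Finset V} (hD : IsDomSet G D) :
    (Fintype.card V : ℤ) - 2 * D.card ≤ sdiffSet G D := by
  have hext := extNbhd_of_dom G hD
  have hDle : D.card ≤ Fintype.card V := card_le_univ D
  have hcard : (extNbhd G D).card = Fintype.card V - D.card := by
    rw [hext, card_sdiff_of_subset (subset_univ _), card_univ]
  have hw : (weak G D).card ≤ D.card := card_le_card (filter_subset _ _)
  unfold sdiffSet
  omega

lemma lb_2dom {D : Finset V} (hD : Is2DomSet G D) :
    (Fintype.card V : ℤ) - D.card ≤ sdiffSet G D := by
  have hdom : IsDomSet G D := by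
    intro v hv
    have h2 := hD v hv
    have hne : (G.neighborFinset v ∩ D).Nonempty := card_pos.mp (by omega)
    obtain ⟨u, hu⟩ := hne
    rw [mem_inter, SimpleGraph.mem_neighborFinset] at hu
    exact ⟨u, hu.2, hu.1⟩
  have hext := extNbhd_of_dom G hdom
  have hDle : D.card ≤ Fintype.card V := card_le_univ D
  have hcard : (extNbhd G D).card = Fintype.card V - D.card := by
    rw [hext, card_sdiff_of_subset (subset_univ _), card_univ]
  have hw : weak G D = ∅ := by
    rw [eq_empty_iff_forall_notMem]
    intro v hv
    rw [weak, mem_filter] at hv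
    obtain ⟨u, hu⟩ := hv.2
    rw [epn, mem_filter] at hu
    have h2 := hD u hu.2.1
    rw [hu.2.2, card_singleton] at h2
    omega
  unfold sdiffSet
  rw [hw, card_empty]
  omega

lemma ub_main (D : Finset V) :
    sdiffSet G D ≤ (Fintype.card V : ℤ) - gamma G - sigmaSupp G := by
  classical
  set W : Finset V := univ.filter (fun u => u ∉ D ∧ u ∉ extNbhd G D) with hWdef
  set A : Finset V := univ.filter
      (fun v => 2 ≤ ((G.neighborFinset v).filter fun u => G.degree u = 1).card) with hAdef
  set B : Finset V := A \ weak G D with hBdef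
  set L : Finset V := B.biUnion
      (fun v => (G.neighborFinset v).filter fun u => G.degree u = 1) with hLdef
  set S : Finset V := ((D ∪ W) \ L) ∪ B with hSdef
  have hsig : sigmaSupp G = A.card := rfl
  -- leaf uniqueness
  have leaf_uniq : ∀ l : V, G.degree l = 1 → ∀ v w : V, G.Adj v l → G.Adj w l → v = w := by
    intro l hl v w hv hw
    rw [SimpleGraph.degree, card_eq_one] at hl
    obtain ⟨a, ha⟩ := hl
    have hv' : v ∈ G.neighborFinset l := by
      rw [SimpleGraph.mem_neighborFinset]; exact hv.symm
    have hw' : w ∈ G.neighborFinset l := by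
      rw [SimpleGraph.mem_neighborFinset]; exact hw.symm
    rw [ha, mem_singleton] at hv' hw'
    rw [hv', hw']
  -- L ⊆ D ∪ W
  have hLsub : L ⊆ D ∪ W := by
    intro l hl
    rw [hLdef, mem_biUnion] at hl
    obtain ⟨v, hvB, hl⟩ := hl
    rw [mem_filter, SimpleGraph.mem_neighborFinset] at hl
    obtain ⟨hadjvl, hdeg⟩ := hl
    by_contra hcon
    have hlD : l ∉ D := fun h => hcon (mem_union_left _ h)
    have hlW : l ∉ W := fun h => hcon (mem_union_right _ h)
    have hlext : l ∈ extNbhd G D := by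
      rw [hWdef, mem_filter] at hlW
      push_neg at hlW
      exact hlW (mem_univ l) hlD
    rw [extNbhd, mem_filter] at hlext
    obtain ⟨-, -, d, hdD, hadj⟩ := hlext
    have hvd : v = d := leaf_uniq l hdeg v d hadjvl hadj.symm
    -- so v ∈ D and l ∈ epn G v D
    have hvD : v ∈ D := hvd ▸ hdD
    have hnb : G.neighborFinset l = {v} := by
      rw [SimpleGraph.degree, card_eq_one] at hdeg
      obtain ⟨a, ha⟩ := hdeg
      have : v ∈ G.neighborFinset l := by
        rw [SimpleGraph.mem_neighborFinset]; exact hadjvl.symm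
      rw [ha, mem_singleton] at this
      rw [ha, this]
    have hepn : l ∈ epn G v D := by
      rw [epn, mem_filter]
      refine ⟨mem_univ l, hlD, ?_⟩
      rw [hnb, Finset.singleton_inter_of_mem hvD]
    have hvw : v ∈ weak G D := by
      rw [weak, mem_filter]
      exact ⟨hvD, ⟨l, hepn⟩⟩
    rw [hBdef, mem_sdiff] at hvB
    exact hvB.2 hvw
  -- card of L
  have hLcard : 2 * B.card ≤ L.card := by
    rw [hLdef, card_biUnion]
    · have hs := Finset.card_nsmul_le_sum B
        (fun v => ((G.neighborFinset v).filter fun u => G.degree u = 1).card) 2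
        (fun v hv => by
          rw [hBdef, mem_sdiff, hAdef, mem_filter] at hv
          exact hv.1.2)
      rw [smul_eq_mul] at hs
      omega
    · intro v hv w hw hvw
      simp only [Function.onFun]
      rw [Finset.disjoint_left]
      intro x hx hx'
      rw [mem_filter, SimpleGraph.mem_neighborFinset] at hx hx'
      exact hvw (leaf_uniq x hx.2 v w hx.1 hx'.1)
  -- card of S
  have hScard : S.card + L.card ≤ D.card + W.card + B.card := by
    have h1 : S.card ≤ ((D ∪ W) \ L).card + B.card := card_union_le _ _
    have h2 : ((D ∪ W) \ L).card = (D ∪ W).card - L.card := card_sdiff_of_subset hLsub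
    have h3 : (D ∪ W).card ≤ D.card + W.card := card_union_le _ _
    have h4 : L.card ≤ (D ∪ W).card := card_le_card hLsub
    omega
  -- A ⊆ B ∪ weak
  have hABw : A.card ≤ B.card + (weak G D).card := by
    have : A ⊆ B ∪ weak G D := by
      intro a ha
      by_cases h : a ∈ weak G D
      · exact mem_union_right _ h
      · exact mem_union_left _ (by rw [hBdef, mem_sdiff]; exact ⟨ha, h⟩)
    calc A.card ≤ (B ∪ weak G D).card := card_le_card this
      _ ≤ B.card + (weak G D).card := card_union_le _ _
  -- S is dominating
  have hdom : IsDomSet G S := by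
    intro u hu
    by_cases huDW : u ∈ D ∪ W
    · have huL : u ∈ L := by
        by_contra h
        exact hu (mem_union_left _ (mem_sdiff.mpr ⟨huDW, h⟩))
      rw [hLdef, mem_biUnion] at huL
      obtain ⟨v, hvB, hv⟩ := huL
      rw [mem_filter, SimpleGraph.mem_neighborFinset] at hv
      exact ⟨v, mem_union_right _ hvB, hv.1.symm⟩
    · have huD : u ∉ D := fun h => huDW (mem_union_left _ h)
      have huW : u ∉ W := fun h => huDW (mem_union_right _ h)
      have huext : u ∈ extNbhd G D := by
        rw [hWdef, mem_filter] at huW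
        push_neg at huW
        exact huW (mem_univ u) huD
      rw [extNbhd, mem_filter] at huext
      obtain ⟨-, -, d, hdD, hadj⟩ := huext
      refine ⟨d, ?_, hadj⟩
      by_contra hdS
      have hdL : d ∈ L := by
        by_contra h
        exact hdS (mem_union_left _ (mem_sdiff.mpr ⟨mem_union_left _ hdD, h⟩))
      rw [hLdef, mem_biUnion] at hdL
      obtain ⟨v, hvB, hv⟩ := hdL
      rw [mem_filter, SimpleGraph.mem_neighborFinset] at hv
      have huv : u = v := leaf_uniq d hv.2 u v hadj hv.1
      exact hu (mem_union_right _ (huv ▸ hvB))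
  have hgam : gamma G ≤ S.card := gamma_le_card G hdom
  -- partition of V
  have hn : Fintype.card V = D.card + (extNbhd G D).card + W.card := by
    have hunion : D ∪ extNbhd G D ∪ W = univ := by
      ext u
      simp only [mem_union, mem_univ, iff_true, hWdef, mem_filter, true_and]
      by_cases h1 : u ∈ D
      · exact Or.inl (Or.inl h1)
      by_cases h2 : u ∈ extNbhd G D
      · exact Or.inl (Or.inr h2)
      · exact Or.inr ⟨h1, h2⟩
    have hd1 : Disjoint D (extNbhd G D) := by
      rw [Finset.disjoint_left]
      intro x hx hx'
      rw [extNbhd, mem_filter] at hx'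
      exact hx'.2.1 hx
    have hd2 : Disjoint (D ∪ extNbhd G D) W := by
      rw [Finset.disjoint_right]
      intro x hx hx'
      rw [hWdef, mem_filter] at hx
      rcases mem_union.mp hx' with h | h
      · exact hx.2.1 h
      · exact hx.2.2 h
    rw [← card_univ, ← hunion, card_union_of_disjoint hd2, card_union_of_disjoint hd1]
  unfold sdiffSet
  omega

end Aux

theorem stmt_5 {V : Type*} [Fintype V] [DecidableEq V] (G : SimpleGraph V)
    [DecidableRel G.Adj] :
    (Fintype.card V : ℤ) - min (2 * gamma G) (gamma2 G) ≤ sdiff G ∧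
      sdiff G ≤ (Fintype.card V : ℤ) - gamma G - sigmaSupp G := by
  constructor
  · obtain ⟨D1, hD1, hc1⟩ := exists_gamma G
    obtain ⟨D2, hD2, hc2⟩ := exists_gamma2 G
    have h1 := (lb_dom G hD1).trans (sdiffSet_le_sdiff G D1)
    have h2 := (lb_2dom G hD2).trans (sdiffSet_le_sdiff G D2)
    rw [hc1] at h1
    rw [hc2] at h2
    omega
  · unfold sdiff
    apply Finset.sup'_le
    intro D _
    exact ub_main G D


end StrongDifferential
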